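/- Let d be a positive odd integer, k = ⌊d/4⌋, and c_j = (∏_{1≤ℓ≤k} (d - 2j - 2ℓ)) / (∏_{1≤ℓ≤k, ℓ≠j} (2ℓ - 2j)) for 1 ≤ j ≤ k. Then for every j with 1 ≤ j ≤ k one has ∑_{i=1}^{k} c_i / (d - 2i - 2j)^2 = 1/c_j. In particular, the quantity ∑_{i=1}^{k} (c_i c_j)/((d - 2i - 2j)^2) · 2j(d - 2j - 2) equals 2j(d - 2j - 2) and is nonzero. -/

import Mathlib

open Finset Polynomial

/-- Lagrange interpolation identity at the nodes `2i`, evaluated at `d - 2j`. -/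
lemma lagrange_key (d k j : ℕ) (hjS : j ∈ Finset.Icc 1 k) :
    ∑ i ∈ Finset.Icc 1 k,
      (∏ ℓ ∈ (Finset.Icc 1 k).erase j, ((d:ℝ) - 2*i - 2*ℓ)) *
        ((∏ ℓ ∈ (Finset.Icc 1 k).erase i, ((d:ℝ) - 2*j - 2*ℓ)) /
          ∏ ℓ ∈ (Finset.Icc 1 k).erase i, (2*(i:ℝ) - 2*ℓ)) =
    ∏ ℓ ∈ (Finset.Icc 1 k).erase j, (2*(j:ℝ) - 2*ℓ) := by
  set S := Finset.Icc 1 k with hS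
  set v : ℕ → ℝ := fun n => 2 * n with hv
  have hvinj : Set.InjOn v S := by
    intro a _ b _ hab
    have : (a : ℝ) = b := by simpa [hv] using hab
    exact_mod_cast this
  set T : Polynomial ℝ := ∏ ℓ ∈ S.erase j, (Polynomial.C ((d:ℝ) - 2*ℓ) - Polynomial.X) with hT
  have hdeg : T.degree < S.card := by
    have h1 : T.degree = ((S.erase j).card : WithBot ℕ) := by
      rw [hT, degree_prod]
      have : ∀ ℓ ∈ S.erase j, (Polynomial.C ((d:ℝ) - 2*ℓ) - Polynomial.X).degree = 1 := by
        intro ℓ _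
        rw [← neg_sub, degree_neg, degree_X_sub_C]
      rw [Finset.sum_congr rfl this, Finset.sum_const, nsmul_eq_mul, mul_one]
    rw [h1, Finset.card_erase_of_mem hjS]
    exact_mod_cast Nat.sub_lt (Finset.card_pos.mpr ⟨j, hjS⟩) one_pos
  have hinterp := Lagrange.eq_interpolate hvinj hdeg
  have := congrArg (Polynomial.eval ((d:ℝ) - 2*j)) hinterp
  rw [Lagrange.interpolate_apply] at this
  simp only [eval_finset_sum, eval_mul, eval_C] at this
  have hL : T.eval ((d:ℝ) - 2*j) = ∏ ℓ ∈ S.erase j, (2*(j:ℝ) - 2*ℓ) := by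
    rw [hT, eval_prod]
    refine Finset.prod_congr rfl fun ℓ _ => ?_
    simp only [eval_sub, eval_C, eval_X]; ring
  have hbasis : ∀ i ∈ S, (Lagrange.basis S v i).eval ((d:ℝ) - 2*j) =
      (∏ ℓ ∈ S.erase i, ((d:ℝ) - 2*j - 2*ℓ)) / ∏ ℓ ∈ S.erase i, (2*(i:ℝ) - 2*ℓ) := by
    intro i _
    rw [Lagrange.basis, eval_prod]
    rw [div_eq_mul_inv, ← Finset.prod_inv_distrib, ← Finset.prod_mul_distrib]
    refine Finset.prod_congr rfl fun ℓ _ => ?_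
    rw [Lagrange.basisDivisor]
    simp [hv]
    ring
  have hTi : ∀ i : ℕ, T.eval (v i) = ∏ ℓ ∈ S.erase j, ((d:ℝ) - 2*i - 2*ℓ) := by
    intro i
    rw [hT, eval_prod]
    refine Finset.prod_congr rfl fun ℓ _ => ?_
    simp only [eval_sub, eval_C, eval_X, hv]; ring
  rw [hL] at this
  rw [this]
  refine Finset.sum_congr rfl fun i hi => ?_
  rw [hbasis i hi, hTi i]

theorem ci_square_identity (d : ℕ) (hd : Odd d) (hd0 : 0 < d) (hk : 1 ≤ d / 4)
    (c : ℕ → ℝ)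
    (hc : ∀ j, c j =
      (∏ ℓ ∈ Finset.Icc 1 (d / 4), ((d : ℝ) - 2 * (j : ℝ) - 2 * (ℓ : ℝ))) /
        ∏ ℓ ∈ (Finset.Icc 1 (d / 4)).erase j, (2 * (ℓ : ℝ) - 2 * (j : ℝ)))
    (j : ℕ) (hj1 : 1 ≤ j) (hj2 : j ≤ d / 4) :
    (∑ i ∈ Finset.Icc 1 (d / 4),
        c i / ((d : ℝ) - 2 * (i : ℝ) - 2 * (j : ℝ)) ^ 2 = 1 / c j) ∧
    (∑ i ∈ Finset.Icc 1 (d / 4),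
        (c i * c j) / ((d : ℝ) - 2 * (i : ℝ) - 2 * (j : ℝ)) ^ 2 *
          (2 * (j : ℝ) * ((d : ℝ) - 2 * (j : ℝ) - 2)) =
      2 * (j : ℝ) * ((d : ℝ) - 2 * (j : ℝ) - 2)) ∧
    2 * (j : ℝ) * ((d : ℝ) - 2 * (j : ℝ) - 2) ≠ 0 := by
  set k := d / 4 with hkdef
  set S := Finset.Icc 1 k with hS
  have hjS : j ∈ S := Finset.mem_Icc.mpr ⟨hj1, hj2⟩
  -- every d - 2a - 2b is a nonzero real since d is odd
  have hodd : ∀ a b : ℕ, ((d : ℝ) - 2 * a - 2 * b) ≠ 0 := by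
    intro a b h
    have h2 : (d : ℝ) = ((2 * (a + b) : ℕ) : ℝ) := by push_cast; linarith
    have h3 : d = 2 * (a + b) := Nat.cast_injective h2
    obtain ⟨m, hm⟩ := hd
    omega
  have hne2 : ∀ i ℓ : ℕ, ℓ ≠ i → (2 * (ℓ:ℝ) - 2 * i) ≠ 0 := by
    intro i ℓ hli h
    have : (ℓ : ℝ) = i := by linarith
    exact hli (by exact_mod_cast this)
  -- abbreviations
  set A : ℕ → ℝ := fun i => ∏ ℓ ∈ S, ((d:ℝ) - 2*i - 2*ℓ) with hA
  set B : ℕ → ℝ := fun i => ∏ ℓ ∈ S.erase i, (2*(ℓ:ℝ) - 2*i) with hB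
  set P : ℕ → ℝ := fun i => ∏ ℓ ∈ S.erase j, ((d:ℝ) - 2*i - 2*ℓ) with hP
  set Q : ℕ → ℝ := fun i => ∏ ℓ ∈ S.erase i, ((d:ℝ) - 2*j - 2*ℓ) with hQ
  set R : ℕ → ℝ := fun i => ∏ ℓ ∈ S.erase i, (2*(i:ℝ) - 2*ℓ) with hR
  set G : ℝ := ∏ ℓ ∈ S.erase j, (2*(j:ℝ) - 2*ℓ) with hG
  have hA0 : ∀ i, A i ≠ 0 := fun i =>
    Finset.prod_ne_zero_iff.mpr fun ℓ _ => hodd i ℓ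
  have hB0 : ∀ i, B i ≠ 0 := fun i =>
    Finset.prod_ne_zero_iff.mpr fun ℓ hℓ => hne2 i ℓ (Finset.ne_of_mem_erase hℓ)
  have hR0 : ∀ i, R i ≠ 0 := by
    intro i
    refine Finset.prod_ne_zero_iff.mpr fun ℓ hℓ => ?_
    have := hne2 i ℓ (Finset.ne_of_mem_erase hℓ)
    intro h; exact this (by linarith)
  have hG0 : G ≠ 0 := by
    refine Finset.prod_ne_zero_iff.mpr fun ℓ hℓ => ?_
    have := hne2 j ℓ (Finset.ne_of_mem_erase hℓ)
    intro h; exact this (by linarith)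
  have hcval : ∀ i, c i = A i / B i := fun i => hc i
  have hc0 : ∀ i, c i ≠ 0 := fun i => (hcval i) ▸ div_ne_zero (hA0 i) (hB0 i)
  -- A i = (d - 2i - 2j) * P i
  have hAP : ∀ i : ℕ, A i = ((d:ℝ) - 2*i - 2*j) * P i := fun i =>
    (Finset.mul_prod_erase S _ hjS).symm
  -- A j = (d - 2i - 2j) * Q i  for i ∈ S
  have hAQ : ∀ i ∈ S, A j = ((d:ℝ) - 2*i - 2*j) * Q i := by
    intro i hi
    have := (Finset.mul_prod_erase S (fun ℓ => (d:ℝ) - 2*j - 2*ℓ) hi).symm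
    rw [hA]
    simpa [show (d:ℝ) - 2*j - 2*i = (d:ℝ) - 2*i - 2*j by ring] using this
  -- sign bookkeeping: R i * G = B i * B j
  have hsign : ∀ m : ℕ, R m = (-1:ℝ)^(S.erase m).card * B m := by
    intro m
    rw [hR, hB]
    calc ∏ ℓ ∈ S.erase m, (2*(m:ℝ) - 2*ℓ)
        = ∏ ℓ ∈ S.erase m, ((-1) * (2*(ℓ:ℝ) - 2*m)) :=
          Finset.prod_congr rfl (fun ℓ _ => by ring)
      _ = (-1:ℝ)^(S.erase m).card * ∏ ℓ ∈ S.erase m, (2*(ℓ:ℝ) - 2*m) := by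
          rw [Finset.prod_mul_distrib, Finset.prod_const]
  have hRG : ∀ i ∈ S, R i * G = B i * B j := by
    intro i hi
    have hGB : G = (-1:ℝ)^(S.erase j).card * B j := hsign j
    have hcard : (S.erase i).card = (S.erase j).card := by
      rw [Finset.card_erase_of_mem hi, Finset.card_erase_of_mem hjS]
    rw [hsign i, hGB, hcard]
    have : (-1:ℝ)^(S.erase j).card * (-1:ℝ)^(S.erase j).card = 1 := by
      rw [← pow_add, ← two_mul, pow_mul, neg_one_sq, one_pow]
    calc (-1:ℝ)^(S.erase j).card * B i * ((-1:ℝ)^(S.erase j).card * B j)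
        = ((-1:ℝ)^(S.erase j).card * (-1:ℝ)^(S.erase j).card) * (B i * B j) := by ring
      _ = B i * B j := by rw [this, one_mul]
  -- the Lagrange identity
  have hKey : ∑ i ∈ S, P i * (Q i / R i) = G := lagrange_key d k j hjS
  -- main computation
  have hmain : ∑ i ∈ S, c i / ((d:ℝ) - 2*i - 2*j) ^ 2 * c j = 1 := by
    have hterm : ∀ i ∈ S, c i / ((d:ℝ) - 2*i - 2*j) ^ 2 * c j = P i * (Q i / R i) / G := by
      intro i hi
      have hX := hodd i j
      have e1 : c i / ((d:ℝ) - 2*i - 2*j) ^ 2 * c j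
          = (A i * A j) / (B i * B j * ((d:ℝ) - 2*i - 2*j)^2) := by
        rw [hcval i, hcval j]
        field_simp
      rw [e1, hAP i, hAQ i hi, ← hRG i hi]
      field_simp [hX, hR0 i, hG0]
    rw [Finset.sum_congr rfl hterm, ← Finset.sum_div, hKey, div_self hG0]
  have goal1 : ∑ i ∈ S, c i / ((d : ℝ) - 2 * i - 2 * j) ^ 2 = 1 / c j := by
    rw [eq_div_iff (hc0 j), Finset.sum_mul]
    exact hmain
  refine ⟨goal1, ?_, ?_⟩
  · have : ∀ i ∈ S, (c i * c j) / ((d : ℝ) - 2*i - 2*j) ^ 2 *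
        (2 * (j : ℝ) * ((d : ℝ) - 2 * j - 2)) =
        (c i / ((d:ℝ) - 2*i - 2*j) ^ 2 * c j) * (2 * (j : ℝ) * ((d : ℝ) - 2 * j - 2)) := by
      intro i _; ring
    rw [Finset.sum_congr rfl this, ← Finset.sum_mul, hmain, one_mul]
  · have h1 : (2 * (j:ℝ)) ≠ 0 := by
      have : (j:ℝ) ≠ 0 := Nat.cast_ne_zero.mpr (by omega)
      positivity
    have h2 : ((d:ℝ) - 2*j - 2) ≠ 0 := by
      have := hodd j 1
      intro h; apply this; push_cast; linarith
    exact mul_ne_zero h1 h2
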